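/- Let t be the 4-dimensional complex Lie algebra with basis {a,b,c,d} and nonzero brackets [a,b] = c, [c,b] = d, and let r := a∧c + d∧b ∈ Λ²t. Then the kernel of the cobracket δ(x) = [x⊗1 + 1⊗x, r] is the abelian ideal spanned by c and d, which is strictly contained in the abelian ideal spanned by a, c, d; in particular ker δ is not a maximal abelian subalgebra of t. -/

import Mathlib

open TensorProduct

noncomputable section

variable {t : Type} [LieRing t] [LieAlgebra ℂ t]

attribute [local instance 100] LieRing.ofAssociativeRing

/-- The cobracket `δ(x) = [x ⊗ 1 + 1 ⊗ x, r] = (ad x ⊗ id + id ⊗ ad x)(r)`. -/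
def cobracket (r : t ⊗[ℂ] t) : t →ₗ[ℂ] t ⊗[ℂ] t :=
  (((LinearMap.rTensorHom t + LinearMap.lTensorHom t)
      ∘ₗ (LieAlgebra.ad ℂ t).toLinearMap).flip) r

/-- Let `t` be the 4-dimensional complex Lie algebra with basis `{a,b,c,d}` and nonzero
brackets `[a,b] = c`, `[c,b] = d`, and let `r = a∧c + d∧b`.  Then the kernel of the
cobracket `δ(x) = [x⊗1 + 1⊗x, r]` is the abelian ideal spanned by `c, d`, which is
strictly contained in the abelian ideal spanned by `a, c, d`; in particular `ker δ` is
not a maximal abelian subalgebra of `t`. -/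
theorem ker_cobracket_not_maximal_abelian
    (B : Module.Basis (Fin 4) ℂ t)
    (hab : ⁅B 0, B 1⁆ = B 2) (hcb : ⁅B 2, B 1⁆ = B 3)
    (hac : ⁅B 0, B 2⁆ = 0) (had : ⁅B 0, B 3⁆ = 0)
    (hbd : ⁅B 1, B 3⁆ = 0) (hcd : ⁅B 2, B 3⁆ = 0) :
    let r : t ⊗[ℂ] t :=
      B 0 ⊗ₜ[ℂ] B 2 - B 2 ⊗ₜ[ℂ] B 0 + B 3 ⊗ₜ[ℂ] B 1 - B 1 ⊗ₜ[ℂ] B 3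
    LinearMap.ker (cobracket r) = Submodule.span ℂ {B 2, B 3}
    ∧ (∀ x ∈ Submodule.span ℂ {B 2, B 3}, ∀ y ∈ Submodule.span ℂ {B 2, B 3},
        ⁅x, y⁆ = (0 : t))
    ∧ (∀ x : t, ∀ y ∈ Submodule.span ℂ {B 2, B 3},
        ⁅x, y⁆ ∈ Submodule.span ℂ {B 2, B 3})
    ∧ Submodule.span ℂ {B 2, B 3} < Submodule.span ℂ {B 0, B 2, B 3}
    ∧ (∀ x ∈ Submodule.span ℂ {B 0, B 2, B 3}, ∀ y ∈ Submodule.span ℂ {B 0, B 2, B 3},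
        ⁅x, y⁆ = (0 : t))
    ∧ (∀ x : t, ∀ y ∈ Submodule.span ℂ {B 0, B 2, B 3},
        ⁅x, y⁆ ∈ Submodule.span ℂ {B 0, B 2, B 3})
    ∧ ∃ S : LieSubalgebra ℂ t, IsLieAbelian S ∧
        (LinearMap.ker (cobracket r) : Set t) ⊂ (S : Set t) := by
  intro r
  have hba : ⁅B 1, B 0⁆ = -B 2 := by rw [← lie_skew, hab]
  have hbc : ⁅B 1, B 2⁆ = -B 3 := by rw [← lie_skew, hcb]
  have hca : ⁅B 2, B 0⁆ = 0 := by rw [← lie_skew, hac, neg_zero]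
  have hda : ⁅B 3, B 0⁆ = 0 := by rw [← lie_skew, had, neg_zero]
  have hdb : ⁅B 3, B 1⁆ = 0 := by rw [← lie_skew, hbd, neg_zero]
  have hdc : ⁅B 3, B 2⁆ = 0 := by rw [← lie_skew, hcd, neg_zero]
  -- the cobracket on basis vectors
  have hco : ∀ x : t, cobracket r x =
      (⁅x, B 0⁆ ⊗ₜ[ℂ] B 2 + B 0 ⊗ₜ[ℂ] ⁅x, B 2⁆) - (⁅x, B 2⁆ ⊗ₜ[ℂ] B 0 + B 2 ⊗ₜ[ℂ] ⁅x, B 0⁆)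
      + (⁅x, B 3⁆ ⊗ₜ[ℂ] B 1 + B 3 ⊗ₜ[ℂ] ⁅x, B 1⁆) - (⁅x, B 1⁆ ⊗ₜ[ℂ] B 3 + B 1 ⊗ₜ[ℂ] ⁅x, B 3⁆) := by
    intro x
    simp [cobracket, r, LieAlgebra.ad_apply]
  have h0 : cobracket r (B 0) = B 3 ⊗ₜ[ℂ] B 2 - B 2 ⊗ₜ[ℂ] B 3 := by
    rw [hco]; simp [hab, hac, had, lie_self]
  have h1 : cobracket r (B 1) = B 3 ⊗ₜ[ℂ] B 0 - B 0 ⊗ₜ[ℂ] B 3 := by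
    rw [hco]; simp [hba, hbc, hbd, lie_self, neg_tmul, tmul_neg]; abel
  have h2 : cobracket r (B 2) = 0 := by
    rw [hco]; simp [hca, hcb, hcd, lie_self]
  have h3 : cobracket r (B 3) = 0 := by
    rw [hco]; simp [hda, hdb, hdc, lie_self]
  have key : ∀ x : t, cobracket r x =
      B.repr x 0 • (B 3 ⊗ₜ[ℂ] B 2 - B 2 ⊗ₜ[ℂ] B 3)
        + B.repr x 1 • (B 3 ⊗ₜ[ℂ] B 0 - B 0 ⊗ₜ[ℂ] B 3) := by
    intro x
    conv_lhs => rw [← B.sum_repr x]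
    rw [map_sum, Fin.sum_univ_four]
    simp [h0, h1, h2, h3]
  -- the kernel computation
  have hker : LinearMap.ker (cobracket r) = Submodule.span ℂ {B 2, B 3} := by
    apply le_antisymm
    · intro x hx
      rw [LinearMap.mem_ker, key] at hx
      have e0 : B.repr x 0 = 0 := by
        have := congrArg (fun z => (B.tensorProduct B).repr z (3, 2)) hx
        simpa [Module.Basis.tensorProduct_repr_tmul_apply, Module.Basis.repr_self_apply] using this
      have e1 : B.repr x 1 = 0 := by
        have := congrArg (fun z => (B.tensorProduct B).repr z (3, 0)) hx
        simpa [Module.Basis.tensorProduct_repr_tmul_apply, Module.Basis.repr_self_apply] using this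
      have hxr : x = B.repr x 2 • B 2 + B.repr x 3 • B 3 := by
        conv_lhs => rw [← B.sum_repr x]
        rw [Fin.sum_univ_four, e0, e1]
        simp
      rw [hxr]
      exact Submodule.add_mem _
        (Submodule.smul_mem _ _ (Submodule.subset_span (by simp)))
        (Submodule.smul_mem _ _ (Submodule.subset_span (by simp)))
    · rw [Submodule.span_le]
      rintro y (rfl | rfl)
      · simpa [LinearMap.mem_ker] using h2
      · simpa [LinearMap.mem_ker] using h3
  -- abelian-ness of the big span (hence of the small one)
  set S : Submodule ℂ t := Submodule.span ℂ {B 2, B 3} with hS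
  set T : Submodule ℂ t := Submodule.span ℂ {B 0, B 2, B 3} with hT
  have hST : S ≤ T := Submodule.span_mono (by intro z hz; rcases hz with rfl | rfl <;> simp)
  have habel : ∀ x ∈ T, ∀ y ∈ T, ⁅x, y⁆ = (0 : t) := by
    have base : ∀ y ∈ T, ⁅B 0, y⁆ = 0 ∧ ⁅B 2, y⁆ = 0 ∧ ⁅B 3, y⁆ = 0 := by
      intro y hy
      induction hy using Submodule.span_induction with
      | mem z hz =>
        rcases hz with rfl | rfl | rfl
        · exact ⟨lie_self _, hca, hda⟩
        · exact ⟨hac, lie_self _, hdc⟩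
        · exact ⟨had, hcd, lie_self _⟩
      | zero => simp
      | add u v _ _ hu hv => exact ⟨by rw [lie_add, hu.1, hv.1, add_zero],
          by rw [lie_add, hu.2.1, hv.2.1, add_zero], by rw [lie_add, hu.2.2, hv.2.2, add_zero]⟩
      | smul c u _ hu => exact ⟨by rw [lie_smul, hu.1, smul_zero],
          by rw [lie_smul, hu.2.1, smul_zero], by rw [lie_smul, hu.2.2, smul_zero]⟩
    intro x hx y hy
    induction hx using Submodule.span_induction with
    | mem z hz =>
      rcases hz with rfl | rfl | rfl
      · exact (base y hy).1
      · exact (base y hy).2.1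
      · exact (base y hy).2.2
    | zero => simp
    | add u v _ _ hu hv => rw [add_lie, hu, hv, add_zero]
    | smul c u _ hu => rw [smul_lie, hu, smul_zero]
  -- ideal properties
  have hidS : ∀ x : t, ∀ y ∈ S, ⁅x, y⁆ ∈ S := by
    have hxc : ∀ x : t, ⁅x, B 2⁆ ∈ S ∧ ⁅x, B 3⁆ ∈ S := by
      intro x
      have hx : x = B.repr x 0 • B 0 + B.repr x 1 • B 1 + B.repr x 2 • B 2
          + B.repr x 3 • B 3 := by
        conv_lhs => rw [← B.sum_repr x]; rw [Fin.sum_univ_four]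
      constructor
      · rw [hx]
        simp only [add_lie, smul_lie, hac, hbc, lie_self, hdc, smul_zero, smul_neg,
          add_zero, zero_add]
        exact S.neg_mem (S.smul_mem _ (Submodule.subset_span (by simp)))
      · rw [hx]
        simp only [add_lie, smul_lie, had, hbd, hcd, lie_self, smul_zero, add_zero, zero_add]
        exact S.zero_mem
    intro x y hy
    induction hy using Submodule.span_induction with
    | mem z hz =>
      rcases hz with rfl | rfl
      · exact (hxc x).1
      · exact (hxc x).2
    | zero => simp
    | add u v _ _ hu hv => rw [lie_add]; exact S.add_mem hu hv
    | smul c u _ hu => rw [lie_smul]; exact S.smul_mem _ hu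
  have hidT : ∀ x : t, ∀ y ∈ T, ⁅x, y⁆ ∈ T := by
    have hxc : ∀ x : t, ⁅x, B 0⁆ ∈ T ∧ ⁅x, B 2⁆ ∈ T ∧ ⁅x, B 3⁆ ∈ T := by
      intro x
      have hx : x = B.repr x 0 • B 0 + B.repr x 1 • B 1 + B.repr x 2 • B 2
          + B.repr x 3 • B 3 := by
        conv_lhs => rw [← B.sum_repr x]; rw [Fin.sum_univ_four]
      refine ⟨?_, ?_, ?_⟩
      · rw [hx]
        simp only [add_lie, smul_lie, lie_self, hba, hca, hda, smul_zero, smul_neg,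
          add_zero, zero_add]
        exact T.neg_mem (T.smul_mem _ (Submodule.subset_span (by simp)))
      · rw [hx]
        simp only [add_lie, smul_lie, hac, hbc, lie_self, hdc, smul_zero, smul_neg,
          add_zero, zero_add]
        exact T.neg_mem (T.smul_mem _ (Submodule.subset_span (by simp)))
      · rw [hx]
        simp only [add_lie, smul_lie, had, hbd, hcd, lie_self, smul_zero, add_zero, zero_add]
        exact T.zero_mem
    intro x y hy
    induction hy using Submodule.span_induction with
    | mem z hz =>
      rcases hz with rfl | rfl | rfl
      · exact (hxc x).1
      · exact (hxc x).2.1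
      · exact (hxc x).2.2
    | zero => simp
    | add u v _ _ hu hv => rw [lie_add]; exact T.add_mem hu hv
    | smul c u _ hu => rw [lie_smul]; exact T.smul_mem _ hu
  -- strictness: B 0 ∉ S
  have hnot : B 0 ∉ S := by
    intro h
    have hcoord : ∀ y ∈ S, B.repr y 0 = 0 := by
      intro y hy
      induction hy using Submodule.span_induction with
      | mem z hz => rcases hz with rfl | rfl <;> simp [Module.Basis.repr_self_apply]
      | zero => simp
      | add u v _ _ hu hv => simp [hu, hv]
      | smul c u _ hu => simp [hu]
    have := hcoord _ h
    simp [Module.Basis.repr_self_apply] at this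
  have hlt : S < T := lt_of_le_of_ne hST (fun h => hnot (h ▸ Submodule.subset_span (by simp)))
  refine ⟨hker, fun x hx y hy => habel x (hST hx) y (hST hy), hidS, hlt,
    habel, hidT, ?_⟩
  -- the Lie subalgebra on T
  refine ⟨{ toSubmodule := T, lie_mem' := ?_ }, ?_, ?_⟩
  · intro x y hx hy
    exact hidT x y hy
  · constructor
    intro x y
    exact Subtype.ext (habel x x.2 y y.2)
  · rw [hker]
    exact HasSubset.Subset.ssubset_of_not_subset hST (fun h => hnot (h (Submodule.subset_span (by simp))))
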